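/- Every non-trivial mixing measure-preserving action of a countably infinite group Γ with no non-trivial finite normal subgroup is essentially free. -/

import Mathlib

open MeasureTheory Filter

/-- The action of `Γ` on `(X, μ)` is mixing: along any sequence leaving every finite subset
of `Γ`, `μ(γₙ⁻¹A ∩ B) → μ(A)μ(B)`. -/
def MixingAction {Γ X : Type*} [Group Γ] [MulAction Γ X] [MeasurableSpace X]
    (μ : Measure X) : Prop :=
  ∀ A B : Set X, MeasurableSet A → MeasurableSet B →
    ∀ γ : ℕ → Γ, (∀ F : Finset Γ, ∀ᶠ n in atTop, γ n ∉ F) →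
      Tendsto (fun n => μ ((fun x => γ n • x) ⁻¹' A ∩ B)) atTop (nhds (μ A * μ B))

section Helpers
open Set


lemma injective_escapes {Γ : Type*} {γ : ℕ → Γ} (h : Function.Injective γ) (F : Finset Γ) :
    ∀ᶠ n in atTop, γ n ∉ F := by
  have hfin : {n | γ n ∈ F}.Finite :=
    Set.Finite.preimage h.injOn F.finite_toSet
  have := hfin.eventually_cofinite_notMem
  rwa [Nat.cofinite_eq_atTop] at this

lemma ennreal_eq_one_of_sq {a : ENNReal} (h : a = a * a) (h0 : a ≠ 0) (h1 : a ≤ 1) : a = 1 := by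
  have ht : a ≠ ⊤ := (lt_of_le_of_lt h1 (by simp)).ne
  have h2 : a * 1 = a * a := by rw [mul_one]; exact h
  exact ((ENNReal.mul_right_inj h0 ht).mp h2).symm

lemma finite_atoms {X : Type*} [MeasurableSpace X] [MeasurableSingletonClass X]
    (μ : Measure X) [IsProbabilityMeasure μ] {s : ENNReal} (hs : 0 < s) :
    {x : X | s ≤ μ {x}}.Finite := by
  by_contra hinf
  have hinf' : Set.Infinite {x : X | s ≤ μ {x}} := hinf
  have hstop : s ≠ ⊤ := fun h => by
    obtain ⟨x, hx⟩ := hinf'.nonempty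
    have h1 : μ {x} ≤ 1 := prob_le_one
    simp only [Set.mem_setOf_eq, h, top_le_iff] at hx
    rw [hx] at h1; simp at h1
  obtain ⟨n, hn⟩ := ENNReal.exists_nat_gt (r := s⁻¹) (ENNReal.inv_ne_top.2 hs.ne')
  obtain ⟨t, hts, htcard⟩ := hinf'.exists_subset_card_eq n
  have hsum : μ (⋃ x ∈ t, {x}) = ∑ x ∈ t, μ {x} :=
    measure_biUnion_finset (fun a _ b _ hab => by simp [Set.disjoint_singleton, hab])
      (fun b _ => measurableSet_singleton b)
  have hle : (n : ENNReal) * s ≤ μ (⋃ x ∈ t, {x}) := by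
    rw [hsum]
    calc (n : ENNReal) * s = ∑ _x ∈ t, s := by rw [Finset.sum_const, htcard, nsmul_eq_mul]
    _ ≤ ∑ x ∈ t, μ {x} := Finset.sum_le_sum fun x hx => hts hx
  have hle1 : μ (⋃ x ∈ t, {x}) ≤ 1 := prob_le_one
  have h1lt : 1 < (n : ENNReal) * s :=
    (ENNReal.div_lt_iff (Or.inl hs.ne') (Or.inl hstop)).mp (by rwa [one_div])
  exact absurd (hle.trans hle1) (not_le.mpr h1lt)


lemma real_small_cover (ν : Measure ℝ) [IsProbabilityMeasure ν] [NullSingletonClass ν] {k : ℕ} (hk : 0 < k) :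
    ∃ C : ℕ → Set ℝ, (∀ i, MeasurableSet (C i)) ∧ (⋃ i ∈ Finset.range k, C i) = Set.univ ∧
      ∀ i, ν (C i) ≤ 1 / k := by
  classical
  have hk0 : (k : ENNReal) ≠ 0 := by exact_mod_cast hk.ne'
  have hkt : (k : ENNReal) ≠ ⊤ := ENNReal.natCast_ne_top k
  set q : ℕ → ENNReal := fun i => (i : ENNReal) / k with hq
  have hq_mono : Monotone q := fun i j hij => by
    apply ENNReal.div_le_div_right; exact_mod_cast hij
  have hs_mono : Monotone (fun u : ℝ => ν (Iic u)) := fun a b hab =>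
    measure_mono (Iic_subset_Iic.2 hab)
  -- tendsto to 1 at top
  have h_top : Tendsto (fun n : ℕ => ν (Iic (n : ℝ))) atTop (nhds 1) := by
    have h1 : (⋃ n : ℕ, Iic (n : ℝ)) = Set.univ := by
      ext x; simp only [mem_iUnion, mem_Iic, mem_univ, iff_true]
      obtain ⟨n, hn⟩ := exists_nat_gt x; exact ⟨n, hn.le⟩
    have := tendsto_measure_iUnion_atTop (μ := ν) (s := fun n : ℕ => Iic (n : ℝ))
      (fun a b hab => Iic_subset_Iic.2 (by exact_mod_cast hab))
    rw [h1] at this; simpa [measure_univ, Function.comp_def] using this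
  -- tendsto to 0 at bottom
  have h_bot : Tendsto (fun n : ℕ => ν (Iic (-(n : ℝ)))) atTop (nhds 0) := by
    have h1 : (⋂ n : ℕ, Iic (-(n : ℝ))) = ∅ := by
      ext x; simp only [mem_iInter, mem_Iic, mem_empty_iff_false, iff_false, not_forall, not_le]
      obtain ⟨n, hn⟩ := exists_nat_gt (-x); exact ⟨n, by linarith⟩
    have := tendsto_measure_iInter_atTop (μ := ν) (s := fun n : ℕ => Iic (-(n : ℝ)))
      (fun n => (measurableSet_Iic).nullMeasurableSet)
      (fun a b hab => Iic_subset_Iic.2 (by exact_mod_cast neg_le_neg (by exact_mod_cast hab)))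
      ⟨0, by simp [measure_ne_top]⟩
    rw [h1] at this; simpa [Function.comp_def] using this
  -- right continuity at a
  have h_right : ∀ a : ℝ, Tendsto (fun n : ℕ => ν (Iic (a + 1/(n+1)))) atTop (nhds (ν (Iic a))) := by
    intro a
    have h1 : (⋂ n : ℕ, Iic (a + 1/(n+1))) = Iic a := by
      ext x
      simp only [mem_iInter, mem_Iic]
      constructor
      · intro h
        by_contra hx
        push_neg at hx
        obtain ⟨n, hn⟩ := exists_nat_one_div_lt (sub_pos.2 hx)
        have := h n
        linarith
      · intro h n; have : (0:ℝ) < 1/(n+1) := by positivity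
        linarith
    have := tendsto_measure_iInter_atTop (μ := ν) (s := fun n : ℕ => Iic (a + 1/(n+1)))
      (fun n => measurableSet_Iic.nullMeasurableSet)
      (fun m n hmn => Iic_subset_Iic.2 (by
        have : (1:ℝ)/(n+1) ≤ 1/(m+1) := by
          apply one_div_le_one_div_of_le (by positivity); exact_mod_cast Nat.add_le_add_right (by exact_mod_cast hmn) 1
        linarith))
      ⟨0, measure_ne_top ν _⟩
    rw [h1] at this; exact this
  -- left limit at a
  have h_left : ∀ a : ℝ, Tendsto (fun n : ℕ => ν (Iic (a - 1/(n+1)))) atTop (nhds (ν (Iic a))) := by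
    intro a
    have h1 : (⋃ n : ℕ, Iic (a - 1/(n+1))) = Iio a := by
      ext x
      simp only [mem_iUnion, mem_Iic, mem_Iio]
      constructor
      · rintro ⟨n, hn⟩
        have : (0:ℝ) < 1/(n+1) := by positivity
        linarith
      · intro h
        obtain ⟨n, hn⟩ := exists_nat_one_div_lt (sub_pos.2 h)
        exact ⟨n, by linarith⟩
    have h2 : ν (Iio a) = ν (Iic a) := by
      have : Iic a = Iio a ∪ {a} := by
        ext x; simp only [mem_Iic, mem_union, mem_Iio, mem_singleton_iff]
        constructor
        · intro h; rcases lt_or_eq_of_le h with h | h; exacts [Or.inl h, Or.inr h]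
        · rintro (h | rfl); exacts [h.le, le_refl _]
      rw [this]
      have h3 : ν (Iio a ∪ {a}) ≤ ν (Iio a) + ν {a} := measure_union_le _ _
      have h4 : ν (Iio a) ≤ ν (Iio a ∪ {a}) := measure_mono subset_union_left
      rw [measure_singleton, add_zero] at h3
      exact le_antisymm h4 h3
    have := tendsto_measure_iUnion_atTop (μ := ν) (s := fun n : ℕ => Iic (a - 1/(n+1)))
      (fun m n hmn => Iic_subset_Iic.2 (by
        have : (1:ℝ)/(n+1) ≤ 1/(m+1) := by
          apply one_div_le_one_div_of_le (by positivity); exact_mod_cast Nat.add_le_add_right (by exact_mod_cast hmn) 1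
        linarith))
    rw [h1, h2] at this; exact this
  -- quantile sets
  set S : ℕ → Set ℝ := fun j => {u | q j ≤ ν (Iic u)} with hSdef
  have hS_ne : ∀ j, j < k → (S j).Nonempty := by
    intro j hj
    have hqj1 : q j < 1 := by
      rw [hq]
      rw [ENNReal.div_lt_iff (Or.inl hk0) (Or.inl hkt), one_mul]
      exact_mod_cast hj
    obtain ⟨n, hn⟩ := (h_top.eventually_const_lt hqj1).exists
    exact ⟨n, hn.le⟩
  have hS_bdd : ∀ j, 0 < j → BddBelow (S j) := by
    intro j hj
    have hq0 : 0 < q j := ENNReal.div_pos (by exact_mod_cast hj.ne') hkt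
    obtain ⟨n, hn⟩ := (h_bot.eventually_lt_const hq0).exists
    refine ⟨-(n : ℝ), fun u hu => ?_⟩
    by_contra hun
    push_neg at hun
    have : ν (Iic u) ≤ ν (Iic (-(n:ℝ))) := hs_mono hun.le
    exact absurd hu (by simp only [hSdef, Set.mem_setOf_eq, not_le]; exact lt_of_le_of_lt this hn)
  set t : ℕ → ℝ := fun j => sInf (S j) with htdef
  have hge : ∀ j, 0 < j → j < k → ∀ u, t j < u → q j ≤ ν (Iic u) := by
    intro j hj hjk u hu
    obtain ⟨v, hvS, hvu⟩ := (csInf_lt_iff (hS_bdd j hj) (hS_ne j hjk)).mp hu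
    exact le_trans hvS (hs_mono hvu.le)
  have hval : ∀ j, 0 < j → j < k → ν (Iic (t j)) = q j := by
    intro j hj hjk
    refine le_antisymm ?_ ?_
    · refine le_of_tendsto (h_left (t j)) (Eventually.of_forall fun n => ?_)
      have hnot : t j - 1/(n+1) ∉ S j := by
        intro hmem
        have h2 : t j ≤ t j - 1/(n+1) := csInf_le (hS_bdd j hj) hmem
        have hpos : (0:ℝ) < 1/(n+1) := by positivity
        linarith
      simp only [hSdef, Set.mem_setOf_eq, not_le] at hnot
      exact hnot.le
    · refine ge_of_tendsto (h_right (t j)) (Eventually.of_forall fun n => ?_)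
      refine hge j hj hjk _ ?_
      have hpos : (0:ℝ) < 1/(n+1) := by positivity
      linarith
  have ht_mono : ∀ i j, 0 < i → i ≤ j → j < k → t i ≤ t j := by
    intro i j hi hij hjk
    refine csInf_le_csInf (hS_bdd i hi) (hS_ne j hjk) ?_
    intro u hu
    simp only [hSdef, Set.mem_setOf_eq] at hu ⊢
    exact le_trans (hq_mono hij) hu
  classical
  set A : ℕ → Set ℝ := fun j => if j = 0 then ∅ else if k ≤ j then Set.univ else Iic (t j)
    with hAdef
  have hA_meas : ∀ j, MeasurableSet (A j) := by
    intro j; rw [hAdef]; dsimp only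
    split_ifs
    · exact MeasurableSet.empty
    · exact MeasurableSet.univ
    · exact measurableSet_Iic
  have hA_mono : Monotone A := by
    intro i j hij
    rw [hAdef]; dsimp only
    by_cases hi0 : i = 0
    · simp [hi0]
    · rw [if_neg hi0, if_neg (by omega : ¬ j = 0)]
      by_cases hki : k ≤ i
      · rw [if_pos hki, if_pos (by omega)]
      · rw [if_neg hki]
        by_cases hkj : k ≤ j
        · rw [if_pos hkj]; exact Set.subset_univ _
        · rw [if_neg hkj]
          exact Iic_subset_Iic.2 (ht_mono i j (by omega) hij (by omega))
  have hA_val : ∀ j, j ≤ k → ν (A j) = q j := by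
    intro j hjk
    rw [hAdef]; dsimp only
    rcases Nat.eq_zero_or_pos j with rfl | hj
    · simp [hq]
    · rcases eq_or_lt_of_le hjk with rfl | hjk'
      · rw [if_neg (by omega), if_pos le_rfl, measure_univ, hq]
        exact (ENNReal.div_self hk0 hkt).symm
      · rw [if_neg (by omega), if_neg (by omega)]
        exact hval j hj hjk'
  refine ⟨fun i => A (i+1) \ A i, fun i => (hA_meas _).diff (hA_meas _), ?_, ?_⟩
  · ext x
    simp only [Set.mem_iUnion, Set.mem_univ, iff_true, exists_prop]
    have hPk : x ∈ A k := by
      rw [hAdef]; dsimp only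
      rw [if_neg (by omega), if_pos le_rfl]; trivial
    have hex : ∃ j, x ∈ A j := ⟨k, hPk⟩
    set j₀ := Nat.find hex with hj₀def
    have h₀ : x ∈ A j₀ := Nat.find_spec hex
    have hj₀k : j₀ ≤ k := Nat.find_le hPk
    have hj₀pos : j₀ ≠ 0 := by
      intro h
      rw [h] at h₀
      rw [hAdef] at h₀; simp at h₀
    refine ⟨j₀ - 1, ?_, ?_, ?_⟩
    · rw [Finset.mem_range]; omega
    · have h11 : j₀ - 1 + 1 = j₀ := by omega
      rw [h11]; exact h₀
    · exact Nat.find_min hex (by omega)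
  · intro i
    by_cases hik : i < k
    · have hsub : A i ⊆ A (i+1) := hA_mono (Nat.le_succ i)
      rw [measure_diff hsub (hA_meas i).nullMeasurableSet (measure_ne_top ν _)]
      rw [hA_val i hik.le, hA_val (i+1) (by omega)]
      rw [hq]
      refine tsub_le_iff_right.mpr ?_
      rw [ENNReal.div_add_div_same]
      refine ENNReal.div_le_div_right ?_ _
      push_cast
      rw [add_comm]
    · have : A i = Set.univ := by
        rw [hAdef]; dsimp only; rw [if_neg (by omega), if_pos (by omega)]
      show ν (A (i+1) \ A i) ≤ 1 / (k:ENNReal)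
      rw [this]
      simp

lemma small_cover {X : Type*} [MeasurableSpace X] [StandardBorelSpace X]
    (μ : Measure X) [IsProbabilityMeasure μ] [NullSingletonClass μ] {k : ℕ} (hk : 0 < k) :
    ∃ B : ℕ → Set X, (∀ i, MeasurableSet (B i)) ∧ (⋃ i ∈ Finset.range k, B i) = Set.univ ∧
      ∀ i, μ (B i) ≤ 1 / k := by
  obtain ⟨f, hf⟩ := exists_measurableEmbedding_real X
  set ν := μ.map f with hν
  haveI : IsProbabilityMeasure ν := Measure.isProbabilityMeasure_map hf.measurable.aemeasurable
  haveI : NullSingletonClass ν := by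
    constructor
    intro t
    rw [hν, hf.map_apply]
    exact Set.Subsingleton.measure_zero
      (fun a ha b hb => hf.injective (by
        simp only [Set.mem_preimage, Set.mem_singleton_iff] at ha hb; rw [ha, hb])) μ
  obtain ⟨C, hCm, hCu, hCb⟩ := real_small_cover ν hk
  refine ⟨fun i => f ⁻¹' C i, fun i => hf.measurable (hCm i), ?_, fun i => ?_⟩
  · rw [← Set.preimage_iUnion₂, hCu, Set.preimage_univ]
  · rw [← hf.map_apply]; exact hCb i

end Helpers

/-- Every non-trivial mixing measure-preserving action of a countably infinite group with no
non-trivial finite normal subgroup is essentially free. -/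


theorem stmt_15 {Γ X : Type*} [Group Γ] [Countable Γ] [Infinite Γ]
    (hnofin : ∀ N : Subgroup Γ, N.Normal → (N : Set Γ).Finite → N = ⊥)
    [MeasurableSpace X] [StandardBorelSpace X] [MulAction Γ X]
    (μ : Measure X) [IsProbabilityMeasure μ]
    (hmp : ∀ γ : Γ, MeasurePreserving (fun x => γ • x) μ μ)
    (hmix : MixingAction (Γ := Γ) μ)
    (hnontriv : ∀ x : X, μ ≠ Measure.dirac x) :
    ∀ᵐ x ∂μ, MulAction.stabilizer Γ x = ⊥ := by
  classical
  letI := upgradeStandardBorel X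
  set Fix : Γ → Set X := fun γ => {x | γ • x = x} with hFixdef
  have hFixMeas : ∀ γ : Γ, MeasurableSet (Fix γ) := by
    intro γ
    have h : Fix γ = (fun x => (γ • x, x)) ⁻¹' (Set.diagonal X) := by
      ext x; simp [hFixdef, Set.diagonal, eq_comm]
    rw [h]
    exact ((hmp γ).measurable.prodMk measurable_id) isClosed_diagonal.measurableSet
  -- injective sequences escape finite sets
  have hseq : ∀ T : Set Γ, T.Infinite → ∃ γseq : ℕ → Γ, Function.Injective γseq ∧
      (∀ n, γseq n ∈ T) ∧ ∀ F : Finset Γ, ∀ᶠ n in atTop, γseq n ∉ F := by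
    intro T hT
    obtain e := hT.natEmbedding
    refine ⟨fun n => (e n : Γ), fun a b hab => e.injective (Subtype.ext hab),
      fun n => (e n).2, fun F => ?_⟩
    have hfin : {n : ℕ | (e n : Γ) ∈ F}.Finite :=
      Set.Finite.preimage (Function.Injective.injOn
        (fun a b hab => e.injective (Subtype.ext hab))) F.finite_toSet
    have := hfin.eventually_cofinite_notMem
    rwa [Nat.cofinite_eq_atTop] at this
  -- singleton measures are invariant
  have hsing : ∀ (g : Γ) (x : X), μ {g • x} = μ {x} := by
    intro g x
    have h1 : (fun y => g • y) ⁻¹' ({g • x} : Set X) = {x} := by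
      ext y
      simp only [Set.mem_preimage, Set.mem_singleton_iff]
      exact smul_left_cancel_iff g
    have := (hmp g).measure_preimage
      (measurableSet_singleton (g • x)).nullMeasurableSet
    rw [h1] at this
    exact this.symm
  -- no atoms
  have hNoAtom : ∀ x : X, μ {x} = 0 := by
    by_contra hex
    push_neg at hex
    obtain ⟨x₀, hx₀⟩ := hex
    have hx₀pos : 0 < μ {x₀} := pos_iff_ne_zero.mpr hx₀
    have hfin : {x : X | μ {x₀} ≤ μ {x}}.Finite := finite_atoms μ hx₀pos
    obtain ⟨x₁, hx₁mem, hx₁max⟩ := Set.exists_max_image _ (fun x => μ {x}) hfin ⟨x₀, by simp⟩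
    have hx₁pos : 0 < μ {x₁} := lt_of_lt_of_le hx₀pos hx₁mem
    have hglob : ∀ y : X, μ {y} ≤ μ {x₁} := by
      intro y
      by_cases hy : μ {x₀} ≤ μ {y}
      · exact hx₁max y hy
      · push_neg at hy
        exact le_trans hy.le hx₁mem
    set P : Set X := {x | μ {x₁} ≤ μ {x}} with hPdef
    have hPfin : P.Finite := finite_atoms μ hx₁pos
    have hPinv : ∀ (g : Γ) (x : X), x ∈ P → g • x ∈ P := by
      intro g x hx
      simp only [hPdef, Set.mem_setOf_eq] at hx ⊢
      rwa [hsing]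
    set Pf : Finset X := hPfin.toFinset with hPfdef
    have hmemPf : ∀ x : X, x ∈ Pf ↔ x ∈ P := fun x => hPfin.mem_toFinset
    have hx₁Pf : x₁ ∈ Pf := (hmemPf x₁).mpr (by simp [hPdef])
    set φ : Γ → (↥Pf → ↥Pf) := fun g p => ⟨g • (p : X), (hmemPf _).mpr (hPinv g _ ((hmemPf _).mp p.2))⟩ with hφdef
    obtain ⟨c, hc⟩ := Finite.exists_infinite_fiber φ
    obtain ⟨⟨g₀, hg₀⟩⟩ := hc.nonempty
    set T : Set Γ := {h : Γ | ∀ x ∈ Pf, h • x = x} with hTdef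
    have hTinf : T.Infinite := by
      haveI := hc
      refine Set.infinite_of_injective_forall_mem
        (f := fun g : ↥(φ ⁻¹' {c}) => g₀⁻¹ * (g : Γ)) ?_ ?_
      · intro a b hab
        exact Subtype.ext (mul_left_cancel hab)
      · rintro ⟨g, hg⟩
        simp only [hTdef, Set.mem_setOf_eq]
        intro x hxPf
        have h1 : φ g = c := hg
        have h2 : φ g₀ = c := hg₀
        have h3 : g • x = g₀ • x := by
          have := congrFun (h1.trans h2.symm) ⟨x, hxPf⟩
          exact congrArg Subtype.val this
        rw [mul_smul, h3, inv_smul_smul]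
    obtain ⟨γseq, hinj, hmem, hesc⟩ := hseq T hTinf
    have hfix : ∀ n, (fun x => γseq n • x) ⁻¹' ({x₁} : Set X) ∩ {x₁} = {x₁} := by
      intro n
      ext y
      simp only [Set.mem_inter_iff, Set.mem_preimage, Set.mem_singleton_iff]
      constructor
      · exact fun h => h.2
      · rintro rfl
        exact ⟨hmem n _ hx₁Pf, rfl⟩
    have hten := hmix {x₁} {x₁} (measurableSet_singleton _) (measurableSet_singleton _) γseq hesc
    have hconst : (fun n => μ ((fun x => γseq n • x) ⁻¹' ({x₁} : Set X) ∩ {x₁})) = fun _ => μ {x₁} := by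
      funext n; rw [hfix n]
    rw [hconst] at hten
    have heq : μ {x₁} = μ {x₁} * μ {x₁} := tendsto_nhds_unique tendsto_const_nhds hten
    have h1 : μ {x₁} = 1 := ennreal_eq_one_of_sq heq hx₁pos.ne' prob_le_one
    refine hnontriv x₁ ?_
    ext s hs
    rw [Measure.dirac_apply' _ hs]
    by_cases hx : x₁ ∈ s
    · rw [Set.indicator_of_mem hx]
      refine le_antisymm prob_le_one ?_
      calc (1 : ENNReal) = μ {x₁} := h1.symm
      _ ≤ μ s := measure_mono (Set.singleton_subset_iff.2 hx)
    · rw [Set.indicator_of_notMem hx]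
      have hcompl : μ ({x₁}ᶜ) = 0 := (prob_compl_eq_zero_iff (measurableSet_singleton x₁)).mpr h1
      have hsub : s ⊆ {x₁}ᶜ := by
        intro y hy
        simp only [Set.mem_compl_iff, Set.mem_singleton_iff]
        rintro rfl; exact hx hy
      exact le_antisymm (le_trans (measure_mono hsub) (le_of_eq hcompl)) zero_le
  haveI : NullSingletonClass μ := ⟨hNoAtom⟩
  -- sets of elements with large fixed sets are finite
  have hSfin : ∀ r : ENNReal, 0 < r → {δ : Γ | r ≤ μ (Fix δ)}.Finite := by
    intro r hr
    by_contra hinf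
    have hinf' : Set.Infinite {δ : Γ | r ≤ μ (Fix δ)} := hinf
    obtain ⟨δseq, hinjδ, hmemδ, hescδ⟩ := hseq _ hinf'
    obtain ⟨k₀, hk₀⟩ := ENNReal.exists_inv_nat_lt hr.ne'
    set k := k₀ + 1 with hkdef
    have hkne : (k : ENNReal) ≠ 0 := Nat.cast_ne_zero.mpr (Nat.succ_ne_zero k₀)
    have hknetop : (k : ENNReal) ≠ ⊤ := ENNReal.natCast_ne_top k
    have hklt : (1 : ENNReal) / k < r := by
      refine lt_of_le_of_lt ?_ hk₀
      rw [one_div]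
      exact ENNReal.inv_le_inv' (by exact_mod_cast Nat.le_succ k₀)
    have hkpos : 0 < k := Nat.succ_pos _
    obtain ⟨B, hBmeas, hBcover, hBsmall⟩ := small_cover μ hkpos
    have hsum : Tendsto (fun n => ∑ i ∈ Finset.range k, μ ((fun x => δseq n • x) ⁻¹' B i ∩ B i))
        atTop (nhds (∑ i ∈ Finset.range k, μ (B i) * μ (B i))) :=
      tendsto_finset_sum _ (fun i _ => hmix (B i) (B i) (hBmeas i) (hBmeas i) δseq hescδ)
    have hlim_lt : (∑ i ∈ Finset.range k, μ (B i) * μ (B i)) < r := by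
      calc ∑ i ∈ Finset.range k, μ (B i) * μ (B i)
          ≤ ∑ _i ∈ Finset.range k, (1/(k:ENNReal)) * (1/k) :=
            Finset.sum_le_sum fun i _ => mul_le_mul' (hBsmall i) (hBsmall i)
      _ = k * ((1/(k:ENNReal)) * (1/k)) := by
            rw [Finset.sum_const, Finset.card_range, nsmul_eq_mul]
      _ = 1/(k:ENNReal) := by
            rw [one_div, ← mul_assoc, ENNReal.mul_inv_cancel hkne hknetop, one_mul]
      _ < r := hklt
    obtain ⟨n, hn⟩ := (hsum.eventually_lt_const hlim_lt).exists
    have hle : r ≤ ∑ i ∈ Finset.range k, μ ((fun x => δseq n • x) ⁻¹' B i ∩ B i) := by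
      refine le_trans (hmemδ n) ?_
      refine le_trans (measure_mono ?_) (measure_biUnion_finset_le _ _)
      intro x hxFix
      have hx : x ∈ ⋃ i ∈ Finset.range k, B i := by rw [hBcover]; trivial
      simp only [Set.mem_iUnion, exists_prop] at hx
      obtain ⟨i, hi, hxB⟩ := hx
      have hfixx : δseq n • x = x := hxFix
      refine Set.mem_biUnion hi ?_
      exact ⟨by rw [Set.mem_preimage, hfixx]; exact hxB, hxB⟩
    exact absurd hn (not_lt.mpr hle)
  -- conjugation formula
  have hconj : ∀ g δ : Γ, Fix (g * δ * g⁻¹) = (fun x => g⁻¹ • x) ⁻¹' (Fix δ) := by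
    intro g δ
    ext x
    simp only [hFixdef, Set.mem_preimage, Set.mem_setOf_eq, mul_smul]
    constructor
    · intro h
      have : g⁻¹ • (g:Γ) • δ • g⁻¹ • x = g⁻¹ • x := by rw [h]
      rwa [inv_smul_smul] at this
    · intro h
      calc g • δ • g⁻¹ • x = g • g⁻¹ • x := by rw [h]
      _ = x := smul_inv_smul g x
  have hconj_meas : ∀ g δ : Γ, μ (Fix (g * δ * g⁻¹)) = μ (Fix δ) := by
    intro g δ
    rw [hconj]
    exact (hmp g⁻¹).measure_preimage (hFixMeas δ).nullMeasurableSet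
  -- positive measure fixed set forces full measure
  have hone : ∀ γ : Γ, 0 < μ (Fix γ) → μ (Fix γ) = 1 := by
    intro γ hpos
    have hfin := hSfin (μ (Fix γ)) hpos
    set ψ : Γ → Γ := fun g => g * γ * g⁻¹ with hψdef
    have hψmem' : ∀ g, ψ g ∈ hfin.toFinset := fun g => by
      rw [Set.Finite.mem_toFinset]
      simp only [Set.mem_setOf_eq, hψdef]
      rw [hconj_meas g γ]
    set ψ' : Γ → ↥hfin.toFinset := fun g => ⟨ψ g, hψmem' g⟩ with hψ'def
    obtain ⟨c, hc⟩ := Finite.exists_infinite_fiber ψ'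
    obtain ⟨⟨g₀, hg₀⟩⟩ := hc.nonempty
    set T : Set Γ := {h : Γ | h * γ * h⁻¹ = γ} with hTdef
    have hTinf : T.Infinite := by
      haveI := hc
      refine Set.infinite_of_injective_forall_mem
        (f := fun g : ↥(ψ' ⁻¹' {c}) => g₀⁻¹ * (g : Γ)) ?_ ?_
      · intro a b hab; exact Subtype.ext (mul_left_cancel hab)
      · rintro ⟨g, hg⟩
        have h1 : ψ g = ψ g₀ := by
          have e1 : ψ' g = c := hg
          have e2 : ψ' g₀ = c := hg₀
          exact congrArg Subtype.val (e1.trans e2.symm)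
        simp only [hψdef] at h1
        simp only [hTdef, Set.mem_setOf_eq]
        have h2 : (g₀⁻¹ * g) * γ * (g₀⁻¹ * g)⁻¹ = g₀⁻¹ * (g * γ * g⁻¹) * g₀ := by group
        rw [h2, h1]
        group
    obtain ⟨γseq, hinjγ, hmemγ, hescγ⟩ := hseq T hTinf
    have hAinv : ∀ n, (fun x => γseq n • x) ⁻¹' (Fix γ) = Fix γ := by
      intro n
      have hcomm : γseq n * γ = γ * γseq n := by
        have := hmemγ n
        simp only [hTdef, Set.mem_setOf_eq] at this
        exact mul_inv_eq_iff_eq_mul.mp this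
      ext x
      simp only [Set.mem_preimage, hFixdef, Set.mem_setOf_eq]
      rw [← mul_smul, ← hcomm, mul_smul]
      exact smul_left_cancel_iff _
    have hten := hmix (Fix γ) (Fix γ) (hFixMeas γ) (hFixMeas γ) γseq hescγ
    have hconst : (fun n => μ ((fun x => γseq n • x) ⁻¹' (Fix γ) ∩ Fix γ)) = fun _ => μ (Fix γ) := by
      funext n; rw [hAinv n, Set.inter_self]
    rw [hconst] at hten
    exact ennreal_eq_one_of_sq (tendsto_nhds_unique tendsto_const_nhds hten) hpos.ne' prob_le_one
  -- the normal subgroup of a.e.-trivially acting elements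
  have hzero : ∀ γ : Γ, γ ≠ 1 → μ (Fix γ) = 0 := by
    intro γ hγ
    by_contra h0
    have hpos : 0 < μ (Fix γ) := pos_iff_ne_zero.mpr h0
    set N : Subgroup Γ :=
      { carrier := {δ : Γ | μ (Fix δ) = 1}
        one_mem' := by
          simp only [Set.mem_setOf_eq]
          have h1 : Fix (1 : Γ) = Set.univ := by
            ext x; simp [hFixdef]
          rw [h1, measure_univ]
        mul_mem' := by
          intro a b ha hb
          simp only [Set.mem_setOf_eq] at ha hb ⊢
          have hsub : Fix a ∩ Fix b ⊆ Fix (a * b) := by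
            intro x hx
            have h1 : a • x = x := hx.1
            have h2 : b • x = x := hx.2
            show (a*b) • x = x
            rw [mul_smul, h2, h1]
          have hint : μ (Fix a ∩ Fix b) = 1 := by
            rw [← prob_compl_eq_zero_iff ((hFixMeas a).inter (hFixMeas b))]
            have hca : μ (Fix a)ᶜ = 0 := (prob_compl_eq_zero_iff (hFixMeas a)).mpr ha
            have hcb : μ (Fix b)ᶜ = 0 := (prob_compl_eq_zero_iff (hFixMeas b)).mpr hb
            rw [Set.compl_inter]
            exact le_antisymm (le_trans (measure_union_le _ _) (by rw [hca, hcb, add_zero])) zero_le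
          exact le_antisymm prob_le_one (hint ▸ measure_mono hsub)
        inv_mem' := by
          intro a ha
          simp only [Set.mem_setOf_eq] at ha ⊢
          have h1 : Fix a⁻¹ = Fix a := by
            ext x
            simp only [hFixdef, Set.mem_setOf_eq]
            rw [inv_smul_eq_iff, eq_comm]
          rw [h1]; exact ha } with hNdef
    have hmemN : ∀ δ : Γ, δ ∈ N ↔ μ (Fix δ) = 1 := fun δ => Iff.rfl
    have hNnormal : N.Normal := by
      constructor
      intro n hn g
      rw [hmemN] at hn ⊢
      rw [hconj_meas g n]
      exact hn
    have hNfin : (N : Set Γ).Finite := by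
      refine Set.Finite.subset (hSfin 1 one_pos) ?_
      intro δ hδ
      have : μ (Fix δ) = 1 := (hmemN δ).mp hδ
      simp only [Set.mem_setOf_eq, this, le_refl]
    have hNbot := hnofin N hNnormal hNfin
    have hγN : γ ∈ N := (hmemN γ).mpr (hone γ hpos)
    rw [hNbot, Subgroup.mem_bot] at hγN
    exact hγ hγN
  -- conclusion
  have hae : ∀ᵐ x ∂μ, ∀ γ : Γ, γ ≠ 1 → γ • x ≠ x := by
    rw [ae_all_iff]
    intro γ
    by_cases hγ : γ = 1
    · exact Filter.Eventually.of_forall (fun x h => absurd hγ h)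
    · have : μ {x : X | ¬ (γ ≠ 1 → γ • x ≠ x)} = 0 := by
        have hsub : {x : X | ¬ (γ ≠ 1 → γ • x ≠ x)} ⊆ Fix γ := by
          intro x hx
          simp only [Set.mem_setOf_eq, Classical.not_imp, not_not] at hx
          exact hx.2
        exact le_antisymm (le_trans (measure_mono hsub) (le_of_eq (hzero γ hγ))) zero_le
      exact this
  refine hae.mono fun x hx => ?_
  rw [eq_bot_iff]
  intro g hg
  rw [MulAction.mem_stabilizer_iff] at hg
  by_contra hne
  exact hx g (by simpa using hne) hg
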